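/- Let G be a biconnected loopless 4-regular multigraph and u, v a separation pair of G such that u and v each have degree 3 into a component A (i.e., deg_A(u) = deg_A(v) = 3). Then the graph A' obtained from the induced subgraph on A ∪ {u, v} by adding one edge between u and v is a biconnected 4-regular multigraph, and the graph B' obtained from the rest of G by deleting u and v and joining their unique neighbors outside A by a new edge is also a biconnected loopless 4-regular multigraph. -/

import Mathlib

/-- The edge `e` joins the vertices `x` and `y` (in either orientation). -/
def MGBetween {V E : Type} (f s : E → V) (e : E) (x y : V) : Prop :=
  (f e = x ∧ s e = y) ∨ (f e = y ∧ s e = x)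

/-- The edge `e` is incident to the vertex `v`. -/
def MGInc {V E : Type} (f s : E → V) (v : V) (e : E) : Prop := f e = v ∨ s e = v

/-- Two vertices are adjacent if some edge joins them. -/
def MGAdj {V E : Type} (f s : E → V) (x y : V) : Prop := ∃ e, MGBetween f s e x y

/-- The multigraph has no loops. -/
def MGLoopless {V E : Type} (f s : E → V) : Prop := ∀ e, f e ≠ s e

/-- Every vertex has degree exactly `4`. -/
def MGFourRegular {V E : Type} (f s : E → V) : Prop :=
  ∀ v : V, Nat.card {e : E // MGInc f s v e} = 4

/-- The multigraph is connected. -/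
def MGConnected {V E : Type} (f s : E → V) : Prop :=
  Nonempty V ∧ ∀ u v : V, Relation.ReflTransGen (MGAdj f s) u v

/-- Reachability by walks avoiding the vertex `w`. -/
def MGReachAvoiding {V E : Type} (f s : E → V) (w : V) : V → V → Prop :=
  Relation.ReflTransGen (fun x y => x ≠ w ∧ y ≠ w ∧ MGAdj f s x y)

/-- The multigraph is biconnected: connected and without cutvertices. -/
def MGBiconnected {V E : Type} (f s : E → V) : Prop :=
  MGConnected f s ∧ ∀ w u v : V, u ≠ w → v ≠ w → MGReachAvoiding f s w u v

/-- Reachability by walks avoiding both vertices `u` and `v`. -/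
def MGReachAvoiding2 {V E : Type} (f s : E → V) (u v : V) : V → V → Prop :=
  Relation.ReflTransGen (fun x y => x ≠ u ∧ x ≠ v ∧ y ≠ u ∧ y ≠ v ∧ MGAdj f s x y)

private lemma rtg_map {α β : Type*} {r : α → α → Prop} {r' : β → β → Prop} (g : α → β)
    (h : ∀ a b, r a b → Relation.ReflTransGen r' (g a) (g b)) {a b : α}
    (hab : Relation.ReflTransGen r a b) : Relation.ReflTransGen r' (g a) (g b) := by
  induction hab with
  | refl => exact .refl
  | tail _ hbc ih => exact ih.trans (h _ _ hbc)

private lemma card_subtype_subtype {α : Type} (Q P : α → Prop) (h : ∀ a, P a → Q a) :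
    Nat.card {b : {a // Q a} // P b.val} = Nat.card {a // P a} :=
  Nat.card_congr ⟨fun b => ⟨b.1.1, b.2⟩, fun a => ⟨⟨a.1, h _ a.2⟩, a.2⟩, fun _ => rfl, fun _ => rfl⟩

private lemma nat_card_eq_ncard {α : Type} (P : α → Prop) :
    Nat.card {a // P a} = Set.ncard {a | P a} := (Nat.card_coe_set_eq _).symm

private lemma btw_right_unique {V E : Type} {f s : E → V} {e : E} {p o o' : V}
    (h1 : MGBetween f s e p o) (h2 : MGBetween f s e p o') : o = o' := by
  rcases h1 with ⟨h1, h1'⟩ | ⟨h1, h1'⟩ <;> rcases h2 with ⟨h2, h2'⟩ | ⟨h2, h2'⟩ <;> grind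

private lemma btw_symm {V E : Type} {f s : E → V} {e : E} {p q : V}
    (h : MGBetween f s e p q) : MGBetween f s e q p := h.symm

private lemma mgadj_symm {V E : Type} {f s : E → V} {p q : V}
    (h : MGAdj f s p q) : MGAdj f s q p := by obtain ⟨e, he⟩ := h; exact ⟨e, he.symm⟩

private lemma mgreach_symm {V E : Type} (f s : E → V) (w : V) :
    Symmetric (MGReachAvoiding f s w) :=
  fun a b hab => by
    haveI : Std.Symm (fun x y : V => x ≠ w ∧ y ≠ w ∧ MGAdj f s x y) :=
      ⟨fun _ _ h => ⟨h.2.1, h.1, mgadj_symm h.2.2⟩⟩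
    exact (Relation.ReflTransGen.stdSymm (r := fun x y : V => x ≠ w ∧ y ≠ w ∧ MGAdj f s x y)).symm _ _ hab

private lemma card_inc_with_new {V E : Type} [Finite E] {Q : E → Prop} {VS : V → Prop}
    (fS sS : ({e : E // Q e} ⊕ Unit) → {w : V // VS w}) (w : {w : V // VS w}) (P : E → Prop)
    (hP : ∀ (e : E) (he : Q e), MGInc fS sS w (Sum.inl ⟨e, he⟩) ↔ P e)
    (hPQ : ∀ e, P e → Q e)
    (hnew : MGInc fS sS w (Sum.inr ())) :
    Nat.card {e' // MGInc fS sS w e'} = Nat.card {e // P e} + 1 := by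
  rw [nat_card_eq_ncard]
  have hset : {e' | MGInc fS sS w e'} =
      Sum.inl '' {e : {e : E // Q e} | P e.val} ∪ {Sum.inr ()} := by
    ext e'
    rcases e' with e | ⟨⟩
    · simp only [Set.mem_setOf_eq, Set.mem_union, Set.mem_image, Set.mem_singleton_iff]
      constructor
      · intro h
        exact Or.inl ⟨e, (hP e.1 e.2).1 h, rfl⟩
      · rintro (⟨e₀, hP0, he⟩ | h)
        · obtain rfl := Sum.inl.inj he
          exact (hP e₀.1 e₀.2).2 hP0
        · simp at h
    · exact ⟨fun _ => Or.inr rfl, fun _ => hnew⟩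
  rw [hset, Set.ncard_union_eq (by simp [Set.disjoint_left]),
    Set.ncard_image_of_injective _ Sum.inl_injective, Set.ncard_singleton]
  congr 1
  rw [← nat_card_eq_ncard]
  exact card_subtype_subtype Q P hPQ

private lemma card_inc_no_new {V E : Type} [Finite E] {Q : E → Prop} {VS : V → Prop}
    (fS sS : ({e : E // Q e} ⊕ Unit) → {w : V // VS w}) (w : {w : V // VS w}) (P : E → Prop)
    (hP : ∀ (e : E) (he : Q e), MGInc fS sS w (Sum.inl ⟨e, he⟩) ↔ P e)
    (hPQ : ∀ e, P e → Q e)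
    (hnonew : ¬ MGInc fS sS w (Sum.inr ())) :
    Nat.card {e' // MGInc fS sS w e'} = Nat.card {e // P e} := by
  rw [nat_card_eq_ncard]
  have hset : {e' | MGInc fS sS w e'} = Sum.inl '' {e : {e : E // Q e} | P e.val} := by
    ext e'
    rcases e' with e | ⟨⟩
    · simp only [Set.mem_setOf_eq, Set.mem_image]
      constructor
      · intro h
        exact ⟨e, (hP e.1 e.2).1 h, rfl⟩
      · rintro ⟨e₀, hP0, he⟩
        obtain rfl := Sum.inl.inj he
        exact (hP e₀.1 e₀.2).2 hP0
    · simp only [Set.mem_setOf_eq, Set.mem_image]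
      exact ⟨fun h => absurd h hnonew, by rintro ⟨e₀, _, he⟩; cases he⟩
  rw [hset, Set.ncard_image_of_injective _ Sum.inl_injective, ← nat_card_eq_ncard]
  exact card_subtype_subtype Q P hPQ
set_option maxHeartbeats 3200000 in
/-- Let `G` be a biconnected loopless 4-regular multigraph with a separation
pair `u, v` inducing a component `A` into which both `u` and `v` send exactly three edges.
Then the graph `A'` obtained from the subgraph induced on `A ∪ {u, v}` by adding one new edge
between `u` and `v` is a biconnected 4-regular multigraph, and the graph `B'` obtained from the
rest of `G` by deleting `u` and `v` and joining their unique neighbors `x`, `y` outside `A` by a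
new edge is also a biconnected loopless 4-regular multigraph. -/
theorem stmt_12 {V E : Type} [Finite V] [Finite E] (f s : E → V)
    (hloopless : MGLoopless f s) (hreg : MGFourRegular f s) (hbi : MGBiconnected f s)
    (u v : V) (huv : u ≠ v) (A : Set V) (hAu : u ∉ A) (hAv : v ∉ A) (hAne : A.Nonempty)
    -- `A` is a connected component of `G - {u, v}` and the rest is nonempty and connected:
    (hAconn : ∀ a ∈ A, ∀ a' ∈ A, MGReachAvoiding2 f s u v a a')
    (hBne : ∃ w : V, w ≠ u ∧ w ≠ v ∧ w ∉ A)
    (hBconn : ∀ w, w ≠ u → w ≠ v → w ∉ A → ∀ w', w' ≠ u → w' ≠ v → w' ∉ A →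
      MGReachAvoiding2 f s u v w w')
    (hnoedge : ∀ e : E, ¬ (f e ∈ A ∧ s e ∉ A ∧ s e ≠ u ∧ s e ≠ v) ∧
      ¬ (s e ∈ A ∧ f e ∉ A ∧ f e ≠ u ∧ f e ≠ v))
    -- `u` and `v` each send exactly three edges into `A`:
    (hdegu : Nat.card {e : E // ∃ a ∈ A, MGBetween f s e u a} = 3)
    (hdegv : Nat.card {e : E // ∃ a ∈ A, MGBetween f s e v a} = 3)
    -- `x` and `y` are the respective fourth neighbors of `u` and `v`, outside `A ∪ {u, v}`:
    (x y : V) (hx : x ≠ u ∧ x ≠ v ∧ x ∉ A ∧ ∃ e, MGBetween f s e u x)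
    (hy : y ≠ u ∧ y ≠ v ∧ y ∉ A ∧ ∃ e, MGBetween f s e v y)
    -- the multigraph `A'`:
    (fA sA : ({e : E // (f e ∈ A ∨ f e = u ∨ f e = v) ∧ (s e ∈ A ∨ s e = u ∨ s e = v)} ⊕ Unit) →
      {w : V // w ∈ A ∨ w = u ∨ w = v})
    (hfA : ∀ e, (fA (Sum.inl e) : V) = f e.val ∧ (sA (Sum.inl e) : V) = s e.val)
    (hnewA : (fA (Sum.inr ()) : V) = u ∧ (sA (Sum.inr ()) : V) = v)
    -- the multigraph `B'`:
    (fB sB : ({e : E // (f e ∉ A ∧ f e ≠ u ∧ f e ≠ v) ∧ (s e ∉ A ∧ s e ≠ u ∧ s e ≠ v)} ⊕ Unit) →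
      {w : V // w ∉ A ∧ w ≠ u ∧ w ≠ v})
    (hfB : ∀ e, (fB (Sum.inl e) : V) = f e.val ∧ (sB (Sum.inl e) : V) = s e.val)
    (hnewB : (fB (Sum.inr ()) : V) = x ∧ (sB (Sum.inr ()) : V) = y) :
    (MGLoopless fA sA ∧ MGFourRegular fA sA ∧ MGBiconnected fA sA) ∧
    (MGLoopless fB sB ∧ MGFourRegular fB sB ∧ MGBiconnected fB sB) := by
  obtain ⟨hxu, hxv, hxA, eux, heux⟩ := hx
  obtain ⟨hyu, hyv, hyA, evy, hevy⟩ := hy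
  -- every edge out of `A` goes to `u` or `v`
  have hAedge : ∀ (e : E) (a o : V), a ∈ A → MGBetween f s e a o → o ∈ A ∨ o = u ∨ o = v := by
    intro e a o ha hb
    by_contra hc
    push_neg at hc
    obtain ⟨ho1, ho2, ho3⟩ := hc
    rcases hb with ⟨h1, h2⟩ | ⟨h1, h2⟩
    · exact (hnoedge e).1 ⟨h1.symm ▸ ha, h2.symm ▸ ho1, h2.symm ▸ ho2, h2.symm ▸ ho3⟩
    · exact (hnoedge e).2 ⟨h2.symm ▸ ha, h1.symm ▸ ho1, h1.symm ▸ ho2, h1.symm ▸ ho3⟩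
  have hcard : ∀ w : V, ({e | MGInc f s w e} : Set E).ncard = 4 := fun w => by
    rw [← nat_card_eq_ncard]; exact hreg w
  -- the unique edge at `u` not entering `A` joins `u` and `x`
  have keyu : ∀ (e : E) (o : V), MGBetween f s e u o → o ∉ A → e = eux ∧ o = x := by
    have hPA : ({e | ∃ a ∈ A, MGBetween f s e u a} : Set E).ncard = 3 := by
      rw [← nat_card_eq_ncard]; exact hdegu
    have hsub : {e | ∃ a ∈ A, MGBetween f s e u a} ⊆ {e | MGInc f s u e} := by
      rintro e ⟨a, _, (⟨h, _⟩ | ⟨_, h⟩)⟩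
      exacts [Or.inl h, Or.inr h]
    have hdiff : ({e | MGInc f s u e} \ {e | ∃ a ∈ A, MGBetween f s e u a}).ncard = 1 := by
      rw [Set.ncard_diff hsub, hcard u, hPA]
    have hmem : eux ∈ {e | MGInc f s u e} \ {e | ∃ a ∈ A, MGBetween f s e u a} := by
      constructor
      · rcases heux with ⟨h, _⟩ | ⟨_, h⟩
        exacts [Or.inl h, Or.inr h]
      · rintro ⟨a, ha, hb⟩
        exact hxA ((btw_right_unique heux hb) ▸ ha)
    obtain ⟨e₀, he₀⟩ := Set.ncard_eq_one.mp hdiff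
    intro e o hb ho
    have he : e ∈ {e | MGInc f s u e} \ {e | ∃ a ∈ A, MGBetween f s e u a} := by
      constructor
      · rcases hb with ⟨h, _⟩ | ⟨_, h⟩
        exacts [Or.inl h, Or.inr h]
      · rintro ⟨a, ha, hb'⟩
        exact ho ((btw_right_unique hb' hb) ▸ ha)
    rw [he₀] at he hmem
    rw [Set.mem_singleton_iff] at he hmem
    obtain rfl : e = eux := he.trans hmem.symm
    exact ⟨rfl, btw_right_unique hb heux⟩
  -- the unique edge at `v` not entering `A` joins `v` and `y`
  have keyv : ∀ (e : E) (o : V), MGBetween f s e v o → o ∉ A → e = evy ∧ o = y := by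
    have hPA : ({e | ∃ a ∈ A, MGBetween f s e v a} : Set E).ncard = 3 := by
      rw [← nat_card_eq_ncard]; exact hdegv
    have hsub : {e | ∃ a ∈ A, MGBetween f s e v a} ⊆ {e | MGInc f s v e} := by
      rintro e ⟨a, _, (⟨h, _⟩ | ⟨_, h⟩)⟩
      exacts [Or.inl h, Or.inr h]
    have hdiff : ({e | MGInc f s v e} \ {e | ∃ a ∈ A, MGBetween f s e v a}).ncard = 1 := by
      rw [Set.ncard_diff hsub, hcard v, hPA]
    have hmem : evy ∈ {e | MGInc f s v e} \ {e | ∃ a ∈ A, MGBetween f s e v a} := by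
      constructor
      · rcases hevy with ⟨h, _⟩ | ⟨_, h⟩
        exacts [Or.inl h, Or.inr h]
      · rintro ⟨a, ha, hb⟩
        exact hyA ((btw_right_unique hevy hb) ▸ ha)
    obtain ⟨e₀, he₀⟩ := Set.ncard_eq_one.mp hdiff
    intro e o hb ho
    have he : e ∈ {e | MGInc f s v e} \ {e | ∃ a ∈ A, MGBetween f s e v a} := by
      constructor
      · rcases hb with ⟨h, _⟩ | ⟨_, h⟩
        exacts [Or.inl h, Or.inr h]
      · rintro ⟨a, ha, hb'⟩
        exact ho ((btw_right_unique hb' hb) ▸ ha)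
    rw [he₀] at he hmem
    rw [Set.mem_singleton_iff] at he hmem
    obtain rfl : e = evy := he.trans hmem.symm
    exact ⟨rfl, btw_right_unique hb hevy⟩
  -- `x` and `y` are distinct
  have hxy : x ≠ y := by
    intro hxyeq
    have stay : ∀ p q : V, MGReachAvoiding f s x p q →
        (p ∈ A ∨ p = u ∨ p = v) → (q ∈ A ∨ q = u ∨ q = v) := by
      intro p q hpq
      induction hpq with
      | refl => exact id
      | @tail b c _ hbc ih =>
        intro hp
        obtain ⟨hbx, hcx, e, hbtw⟩ := hbc
        rcases ih hp with hbA | rfl | rfl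
        · exact hAedge e b c hbA hbtw
        · by_contra hq
          push_neg at hq
          exact hcx (keyu e c hbtw hq.1).2
        · by_contra hq
          push_neg at hq
          exact hcx ((keyv e c hbtw hq.1).2.trans hxyeq.symm)
    obtain ⟨w, hwu, hwv, hwA⟩ := hBne
    by_cases hwx : w = x
    · by_cases hex : ∃ o, o ∉ A ∧ o ≠ u ∧ o ≠ v ∧ o ≠ x ∧ MGAdj f s x o
      · obtain ⟨o, ho1, ho2, ho3, ho4, _⟩ := hex
        have := stay u o (hbi.2 x u o (Ne.symm hxu) ho4) (Or.inr (Or.inl rfl))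
        tauto
      · push_neg at hex
        have hsub2 : {e | MGInc f s x e} ⊆ {eux, evy} := by
          intro e he
          rcases he with hfe | hse
          · have hbtw : MGBetween f s e x (s e) := Or.inl ⟨hfe, rfl⟩
            have hsA : s e ∉ A := fun hsA =>
              (hnoedge e).2 ⟨hsA, hfe.symm ▸ hxA, hfe.symm ▸ hxu, hfe.symm ▸ hxv⟩
            by_cases h1 : s e = u
            · exact Or.inl (keyu e x (Or.inr ⟨hfe, h1⟩) hxA).1
            by_cases h2 : s e = v
            · exact Or.inr (keyv e x (Or.inr ⟨hfe, h2⟩) hxA).1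
            · exact absurd ⟨e, hbtw⟩
                (hex (s e) hsA h1 h2 (fun hh => hloopless e (hfe.trans hh.symm)))
          · have hbtw : MGBetween f s e x (f e) := Or.inr ⟨rfl, hse⟩
            have hfA' : f e ∉ A := fun hfA' =>
              (hnoedge e).1 ⟨hfA', hse.symm ▸ hxA, hse.symm ▸ hxu, hse.symm ▸ hxv⟩
            by_cases h1 : f e = u
            · exact Or.inl (keyu e x (Or.inl ⟨h1, hse⟩) hxA).1
            by_cases h2 : f e = v
            · exact Or.inr (keyv e x (Or.inl ⟨h2, hse⟩) hxA).1
            · exact absurd ⟨e, hbtw⟩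
                (hex (f e) hfA' h1 h2 (fun hh => hloopless e (hh.trans hse.symm)))
        have hle := Set.ncard_le_ncard hsub2 (Set.toFinite _)
        rw [hcard x] at hle
        have h2 : ({eux, evy} : Set E).ncard ≤ 2 :=
          (Set.ncard_insert_le _ _).trans (by simp)
        omega
    · have := stay u w (hbi.2 x u w (Ne.symm hxu) hwx) (Or.inr (Or.inl rfl))
      tauto
  -- qualification of edges
  have qualA : ∀ {e : E} {p q : V}, MGBetween f s e p q → (p ∈ A ∨ p = u ∨ p = v) →
      (q ∈ A ∨ q = u ∨ q = v) →
      (f e ∈ A ∨ f e = u ∨ f e = v) ∧ (s e ∈ A ∨ s e = u ∨ s e = v) := by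
    rintro e p q (⟨h1, h2⟩ | ⟨h1, h2⟩) hp hq
    · exact ⟨h1.symm ▸ hp, h2.symm ▸ hq⟩
    · exact ⟨h1.symm ▸ hq, h2.symm ▸ hp⟩
  have qualB : ∀ {e : E} {p q : V}, MGBetween f s e p q → (p ∉ A ∧ p ≠ u ∧ p ≠ v) →
      (q ∉ A ∧ q ≠ u ∧ q ≠ v) →
      (f e ∉ A ∧ f e ≠ u ∧ f e ≠ v) ∧ (s e ∉ A ∧ s e ≠ u ∧ s e ≠ v) := by
    rintro e p q (⟨h1, h2⟩ | ⟨h1, h2⟩) hp hq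
    · exact ⟨h1.symm ▸ hp, h2.symm ▸ hq⟩
    · exact ⟨h1.symm ▸ hq, h2.symm ▸ hp⟩
  have hBother : ∀ (w₀ : V), w₀ ∉ A → w₀ ≠ u → w₀ ≠ v → ∀ (e : E) (o : V),
      MGBetween f s e w₀ o →
      (o = u ∧ w₀ = x ∧ e = eux) ∨ (o = v ∧ w₀ = y ∧ e = evy) ∨ (o ∉ A ∧ o ≠ u ∧ o ≠ v) := by
    intro w₀ h1 h2 h3 e o hb
    by_cases hoA : o ∈ A
    · rcases hAedge e o w₀ hoA hb.symm with h | h | h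
      exacts [absurd h h1, absurd h h2, absurd h h3]
    by_cases hou : o = u
    · obtain ⟨he, hw⟩ := keyu e w₀ (hou ▸ hb.symm) h1
      exact Or.inl ⟨hou, hw, he⟩
    by_cases hov : o = v
    · obtain ⟨he, hw⟩ := keyv e w₀ (hov ▸ hb.symm) h1
      exact Or.inr (Or.inl ⟨hov, hw, he⟩)
    · exact Or.inr (Or.inr ⟨hoA, hou, hov⟩)
  -- loopless
  have hloopA : MGLoopless fA sA := by
    rintro (e | e') h
    · exact hloopless e.1 (((hfA e).1.symm.trans (congrArg Subtype.val h)).trans (hfA e).2)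
    · exact huv ((hnewA.1.symm.trans (congrArg Subtype.val h)).trans hnewA.2)
  have hloopB : MGLoopless fB sB := by
    rintro (e | e') h
    · exact hloopless e.1 (((hfB e).1.symm.trans (congrArg Subtype.val h)).trans (hfB e).2)
    · exact hxy ((hnewB.1.symm.trans (congrArg Subtype.val h)).trans hnewB.2)
  -- regularity of A'
  have hregA : MGFourRegular fA sA := by
    intro w
    rcases w.2 with hwA | hwu' | hwv'
    · rw [card_inc_no_new fA sA w (MGInc f s w.val) ?_ ?_ ?_]
      · exact hreg w.val
      · intro e he
        constructor
        · intro hinc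
          rcases hinc with h | h
          · exact Or.inl ((hfA ⟨e, he⟩).1.symm.trans (congrArg Subtype.val h))
          · exact Or.inr ((hfA ⟨e, he⟩).2.symm.trans (congrArg Subtype.val h))
        · intro hinc
          rcases hinc with h | h
          · exact Or.inl (Subtype.ext ((hfA ⟨e, he⟩).1.trans h))
          · exact Or.inr (Subtype.ext ((hfA ⟨e, he⟩).2.trans h))
      · intro e hinc
        rcases hinc with h | h
        · have hbtw : MGBetween f s e w.val (s e) := Or.inl ⟨h, rfl⟩
          exact qualA hbtw (Or.inl hwA) (hAedge e w.val (s e) hwA hbtw)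
        · have hbtw : MGBetween f s e w.val (f e) := Or.inr ⟨rfl, h⟩
          exact (qualA hbtw.symm (hAedge e w.val (f e) hwA hbtw) (Or.inl hwA))
      · intro hinc
        rcases hinc with h | h
        · exact hAu ((hnewA.1.symm.trans (congrArg Subtype.val h)) ▸ hwA)
        · exact hAv ((hnewA.2.symm.trans (congrArg Subtype.val h)) ▸ hwA)
    · rw [card_inc_with_new fA sA w (fun e => ∃ a ∈ A, MGBetween f s e u a) ?_ ?_ ?_, hdegu]
      · intro e he
        constructor
        · intro hinc
          have hinc' : f e = u ∨ s e = u := by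
            rcases hinc with h | h
            · exact Or.inl (((hfA ⟨e, he⟩).1.symm.trans (congrArg Subtype.val h)).trans hwu')
            · exact Or.inr (((hfA ⟨e, he⟩).2.symm.trans (congrArg Subtype.val h)).trans hwu')
          rcases hinc' with h | h
          · have hbtw : MGBetween f s e u (s e) := Or.inl ⟨h, rfl⟩
            rcases he.2 with h2 | h2 | h2
            · exact ⟨s e, h2, hbtw⟩
            · exact absurd (h.trans h2.symm) (hloopless e)
            · exact absurd ((keyu e (s e) hbtw (h2.symm ▸ hAv)).2.symm.trans h2) hxv
          · have hbtw : MGBetween f s e u (f e) := Or.inr ⟨rfl, h⟩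
            rcases he.1 with h2 | h2 | h2
            · exact ⟨f e, h2, hbtw⟩
            · exact absurd (h2.trans h.symm) (hloopless e)
            · exact absurd ((keyu e (f e) hbtw (h2.symm ▸ hAv)).2.symm.trans h2) hxv
        · rintro ⟨a, ha, hb⟩
          rcases hb with ⟨h1, h2⟩ | ⟨h1, h2⟩
          · exact Or.inl (Subtype.ext ((hfA ⟨e, he⟩).1.trans (h1.trans hwu'.symm)))
          · exact Or.inr (Subtype.ext ((hfA ⟨e, he⟩).2.trans (h2.trans hwu'.symm)))
      · rintro e ⟨a, ha, hb⟩
        exact qualA hb (Or.inr (Or.inl rfl)) (Or.inl ha)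
      · exact Or.inl (Subtype.ext (hnewA.1.trans hwu'.symm))
    · rw [card_inc_with_new fA sA w (fun e => ∃ a ∈ A, MGBetween f s e v a) ?_ ?_ ?_, hdegv]
      · intro e he
        constructor
        · intro hinc
          have hinc' : f e = v ∨ s e = v := by
            rcases hinc with h | h
            · exact Or.inl (((hfA ⟨e, he⟩).1.symm.trans (congrArg Subtype.val h)).trans hwv')
            · exact Or.inr (((hfA ⟨e, he⟩).2.symm.trans (congrArg Subtype.val h)).trans hwv')
          rcases hinc' with h | h
          · have hbtw : MGBetween f s e v (s e) := Or.inl ⟨h, rfl⟩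
            rcases he.2 with h2 | h2 | h2
            · exact ⟨s e, h2, hbtw⟩
            · exact absurd ((keyv e (s e) hbtw (h2.symm ▸ hAu)).2.symm.trans h2) hyu
            · exact absurd (h.trans h2.symm) (hloopless e)
          · have hbtw : MGBetween f s e v (f e) := Or.inr ⟨rfl, h⟩
            rcases he.1 with h2 | h2 | h2
            · exact ⟨f e, h2, hbtw⟩
            · exact absurd ((keyv e (f e) hbtw (h2.symm ▸ hAu)).2.symm.trans h2) hyu
            · exact absurd (h2.trans h.symm) (hloopless e)
        · rintro ⟨a, ha, hb⟩
          rcases hb with ⟨h1, h2⟩ | ⟨h1, h2⟩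
          · exact Or.inl (Subtype.ext ((hfA ⟨e, he⟩).1.trans (h1.trans hwv'.symm)))
          · exact Or.inr (Subtype.ext ((hfA ⟨e, he⟩).2.trans (h2.trans hwv'.symm)))
      · rintro e ⟨a, ha, hb⟩
        exact qualA hb (Or.inr (Or.inr rfl)) (Or.inl ha)
      · exact Or.inr (Subtype.ext (hnewA.2.trans hwv'.symm))
  -- regularity of B'
  have hmemx : eux ∈ {e | MGInc f s x e} := by
    rcases heux with ⟨h1, h2⟩ | ⟨h1, h2⟩
    exacts [Or.inr h2, Or.inl h1]
  have hmemy : evy ∈ {e | MGInc f s y e} := by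
    rcases hevy with ⟨h1, h2⟩ | ⟨h1, h2⟩
    exacts [Or.inr h2, Or.inl h1]
  have heuxu : f eux = u ∨ s eux = u := by
    rcases heux with ⟨h1, _⟩ | ⟨_, h2⟩
    exacts [Or.inl h1, Or.inr h2]
  have hevyv : f evy = v ∨ s evy = v := by
    rcases hevy with ⟨h1, _⟩ | ⟨_, h2⟩
    exacts [Or.inl h1, Or.inr h2]
  have hregB : MGFourRegular fB sB := by
    intro w
    obtain ⟨hwA, hwu, hwv⟩ := w.2
    by_cases hwx : w.val = x
    · rw [card_inc_with_new fB sB w (fun e => MGInc f s x e ∧ e ≠ eux) ?_ ?_ ?_]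
      · have h3 : Nat.card {e // MGInc f s x e ∧ e ≠ eux} = 3 := by
          rw [nat_card_eq_ncard]
          have hdiffset : {e | MGInc f s x e ∧ e ≠ eux} = {e | MGInc f s x e} \ {eux} := rfl
          rw [hdiffset, Set.ncard_diff_singleton_of_mem hmemx, hcard x]
        rw [h3]
      · intro e he
        constructor
        · intro hinc
          have hinc' : MGInc f s x e := by
            rcases hinc with h | h
            · exact Or.inl (((hfB ⟨e, he⟩).1.symm.trans (congrArg Subtype.val h)).trans hwx)
            · exact Or.inr (((hfB ⟨e, he⟩).2.symm.trans (congrArg Subtype.val h)).trans hwx)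
          refine ⟨hinc', fun heq => ?_⟩
          subst heq
          rcases heuxu with h | h
          · exact he.1.2.1 h
          · exact he.2.2.1 h
        · rintro ⟨hinc, _⟩
          rcases hinc with h | h
          · exact Or.inl (Subtype.ext ((hfB ⟨e, he⟩).1.trans (h.trans hwx.symm)))
          · exact Or.inr (Subtype.ext ((hfB ⟨e, he⟩).2.trans (h.trans hwx.symm)))
      · rintro e ⟨hinc, hne⟩
        rcases hinc with h | h
        · have hbtw : MGBetween f s e x (s e) := Or.inl ⟨h, rfl⟩
          rcases hBother x hxA hxu hxv e (s e) hbtw with ⟨_, _, he⟩ | ⟨_, hxy', _⟩ | h3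
          · exact absurd he hne
          · exact absurd hxy' hxy
          · exact qualB hbtw ⟨hxA, hxu, hxv⟩ h3
        · have hbtw : MGBetween f s e x (f e) := Or.inr ⟨rfl, h⟩
          rcases hBother x hxA hxu hxv e (f e) hbtw with ⟨_, _, he⟩ | ⟨_, hxy', _⟩ | h3
          · exact absurd he hne
          · exact absurd hxy' hxy
          · exact qualB hbtw.symm h3 ⟨hxA, hxu, hxv⟩
      · exact Or.inl (Subtype.ext (hnewB.1.trans hwx.symm))
    by_cases hwy : w.val = y
    · rw [card_inc_with_new fB sB w (fun e => MGInc f s y e ∧ e ≠ evy) ?_ ?_ ?_]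
      · have h3 : Nat.card {e // MGInc f s y e ∧ e ≠ evy} = 3 := by
          rw [nat_card_eq_ncard]
          have hdiffset : {e | MGInc f s y e ∧ e ≠ evy} = {e | MGInc f s y e} \ {evy} := rfl
          rw [hdiffset, Set.ncard_diff_singleton_of_mem hmemy, hcard y]
        rw [h3]
      · intro e he
        constructor
        · intro hinc
          have hinc' : MGInc f s y e := by
            rcases hinc with h | h
            · exact Or.inl (((hfB ⟨e, he⟩).1.symm.trans (congrArg Subtype.val h)).trans hwy)
            · exact Or.inr (((hfB ⟨e, he⟩).2.symm.trans (congrArg Subtype.val h)).trans hwy)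
          refine ⟨hinc', fun heq => ?_⟩
          subst heq
          rcases hevyv with h | h
          · exact he.1.2.2 h
          · exact he.2.2.2 h
        · rintro ⟨hinc, _⟩
          rcases hinc with h | h
          · exact Or.inl (Subtype.ext ((hfB ⟨e, he⟩).1.trans (h.trans hwy.symm)))
          · exact Or.inr (Subtype.ext ((hfB ⟨e, he⟩).2.trans (h.trans hwy.symm)))
      · rintro e ⟨hinc, hne⟩
        rcases hinc with h | h
        · have hbtw : MGBetween f s e y (s e) := Or.inl ⟨h, rfl⟩
          rcases hBother y hyA hyu hyv e (s e) hbtw with ⟨_, hyx', _⟩ | ⟨_, _, he⟩ | h3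
          · exact absurd hyx'.symm hxy
          · exact absurd he hne
          · exact qualB hbtw ⟨hyA, hyu, hyv⟩ h3
        · have hbtw : MGBetween f s e y (f e) := Or.inr ⟨rfl, h⟩
          rcases hBother y hyA hyu hyv e (f e) hbtw with ⟨_, hyx', _⟩ | ⟨_, _, he⟩ | h3
          · exact absurd hyx'.symm hxy
          · exact absurd he hne
          · exact qualB hbtw.symm h3 ⟨hyA, hyu, hyv⟩
      · exact Or.inr (Subtype.ext (hnewB.2.trans hwy.symm))
    · rw [card_inc_no_new fB sB w (MGInc f s w.val) ?_ ?_ ?_]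
      · exact hreg w.val
      · intro e he
        constructor
        · intro hinc
          rcases hinc with h | h
          · exact Or.inl ((hfB ⟨e, he⟩).1.symm.trans (congrArg Subtype.val h))
          · exact Or.inr ((hfB ⟨e, he⟩).2.symm.trans (congrArg Subtype.val h))
        · intro hinc
          rcases hinc with h | h
          · exact Or.inl (Subtype.ext ((hfB ⟨e, he⟩).1.trans h))
          · exact Or.inr (Subtype.ext ((hfB ⟨e, he⟩).2.trans h))
      · intro e hinc
        rcases hinc with h | h
        · have hbtw : MGBetween f s e w.val (s e) := Or.inl ⟨h, rfl⟩
          rcases hBother w.val hwA hwu hwv e (s e) hbtw with ⟨_, hc, _⟩ | ⟨_, hc, _⟩ | h3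
          · exact absurd hc hwx
          · exact absurd hc hwy
          · exact qualB hbtw ⟨hwA, hwu, hwv⟩ h3
        · have hbtw : MGBetween f s e w.val (f e) := Or.inr ⟨rfl, h⟩
          rcases hBother w.val hwA hwu hwv e (f e) hbtw with ⟨_, hc, _⟩ | ⟨_, hc, _⟩ | h3
          · exact absurd hc hwx
          · exact absurd hc hwy
          · exact qualB hbtw.symm h3 ⟨hwA, hwu, hwv⟩
      · intro hinc
        rcases hinc with h | h
        · exact hwx ((hnewB.1.symm.trans (congrArg Subtype.val h)).symm)
        · exact hwy ((hnewB.2.symm.trans (congrArg Subtype.val h)).symm)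
  refine ⟨⟨hloopA, hregA, ?_⟩, ⟨hloopB, hregB, ?_⟩⟩
  · -- biconnectivity of A'
    classical
    have liftadjA : ∀ (e : E) (p q : V) (hp : p ∈ A ∨ p = u ∨ p = v)
        (hq : q ∈ A ∨ q = u ∨ q = v), MGBetween f s e p q →
        MGAdj fA sA ⟨p, hp⟩ ⟨q, hq⟩ := by
      intro e p q hp hq hb
      refine ⟨Sum.inl ⟨e, qualA hb hp hq⟩, ?_⟩
      rcases hb with ⟨h1, h2⟩ | ⟨h1, h2⟩
      · exact Or.inl ⟨Subtype.ext ((hfA _).1.trans h1), Subtype.ext ((hfA _).2.trans h2)⟩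
      · exact Or.inr ⟨Subtype.ext ((hfA _).1.trans h1), Subtype.ext ((hfA _).2.trans h2)⟩
    have hadjuv : MGAdj fA sA ⟨u, Or.inr (Or.inl rfl)⟩ ⟨v, Or.inr (Or.inr rfl)⟩ :=
      ⟨Sum.inr (), Or.inl ⟨Subtype.ext hnewA.1, Subtype.ext hnewA.2⟩⟩
    let πA : V → {w : V // w ∈ A ∨ w = u ∨ w = v} := fun w =>
      if h : w ∈ A ∨ w = u ∨ w = v then ⟨w, h⟩ else ⟨u, Or.inr (Or.inl rfl)⟩
    have hpiApos : ∀ (w : V) (h : w ∈ A ∨ w = u ∨ w = v), πA w = ⟨w, h⟩ := fun w h => dif_pos h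
    have hpiAneg : ∀ (w : V), ¬(w ∈ A ∨ w = u ∨ w = v) → πA w = ⟨u, Or.inr (Or.inl rfl)⟩ :=
      fun w h => dif_neg h
    have stepAvoidA : ∀ (w₀ : V), w₀ ≠ u → w₀ ≠ v → ∀ a b : V,
        (a ≠ w₀ ∧ b ≠ w₀ ∧ MGAdj f s a b) →
        Relation.ReflTransGen (fun p q => p.val ≠ w₀ ∧ q.val ≠ w₀ ∧ MGAdj fA sA p q)
          (πA a) (πA b) := by
      rintro w₀ hw₀u hw₀v a b ⟨ha, hb, e, hbtw⟩
      by_cases haT : a ∈ A ∨ a = u ∨ a = v <;> by_cases hbT : b ∈ A ∨ b = u ∨ b = v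
      · rw [hpiApos a haT, hpiApos b hbT]
        exact .single ⟨ha, hb, liftadjA e a b haT hbT hbtw⟩
      · rw [hpiAneg b hbT]
        rcases haT with h | rfl | rfl
        · exact absurd (hAedge e a b h hbtw) hbT
        · rw [hpiApos a (Or.inr (Or.inl rfl))]
        · rw [hpiApos a (Or.inr (Or.inr rfl))]
          exact .single ⟨ha, Ne.symm hw₀u, mgadj_symm hadjuv⟩
      · rw [hpiAneg a haT]
        rcases hbT with h | rfl | rfl
        · exact absurd (hAedge e b a h hbtw.symm) haT
        · rw [hpiApos b (Or.inr (Or.inl rfl))]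
        · rw [hpiApos b (Or.inr (Or.inr rfl))]
          exact .single ⟨Ne.symm hw₀u, hb, hadjuv⟩
      · rw [hpiAneg a haT, hpiAneg b hbT]
    have stepA2 : ∀ a b : V, (a ≠ u ∧ a ≠ v ∧ b ≠ u ∧ b ≠ v ∧ MGAdj f s a b) →
        Relation.ReflTransGen (fun p q => p.val ∈ A ∧ q.val ∈ A ∧ MGAdj fA sA p q)
          (πA a) (πA b) := by
      rintro a b ⟨hau, hav, hbu, hbv, e, hbtw⟩
      by_cases haA : a ∈ A
      · have hbA : b ∈ A := by
          rcases hAedge e a b haA hbtw with h | h | h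
          exacts [h, absurd h hbu, absurd h hbv]
        rw [hpiApos a (Or.inl haA), hpiApos b (Or.inl hbA)]
        exact .single ⟨haA, hbA, liftadjA e a b _ _ hbtw⟩
      · have hbA : b ∉ A := by
          intro hbA
          rcases hAedge e b a hbA hbtw.symm with h | h | h
          exacts [haA h, hau h, hav h]
        rw [hpiAneg a (by tauto), hpiAneg b (by tauto)]
    obtain ⟨⟨eu1, au1, hau1, hbu1⟩⟩ : Nonempty {e // ∃ a ∈ A, MGBetween f s e u a} :=
      (Nat.card_ne_zero.mp (by rw [hdegu]; omega)).1
    obtain ⟨⟨ev1, av1, hav1, hbv1⟩⟩ : Nonempty {e // ∃ a ∈ A, MGBetween f s e v a} :=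
      (Nat.card_ne_zero.mp (by rw [hdegv]; omega)).1
    refine ⟨⟨⟨⟨u, Or.inr (Or.inl rfl)⟩⟩, ?_⟩, ?_⟩
    · intro p q
      have hvalx : ∀ r : {w : V // w ∈ A ∨ w = u ∨ w = v}, r.val ≠ x := by
        intro r
        rcases r.2 with h | h | h
        · exact fun hc => hxA (hc ▸ h)
        · exact fun hc => hxu (hc.symm.trans h)
        · exact fun hc => hxv (hc.symm.trans h)
      have hw := hbi.2 x p.val q.val (hvalx p) (hvalx q)
      have hmain := rtg_map πA (stepAvoidA x hxu hxv) hw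
      rw [hpiApos p.val p.2, hpiApos q.val q.2] at hmain
      exact Relation.ReflTransGen.lift id (fun a b h => h.2.2) _ _ hmain
    · intro w' p q hp hq
      have hne' : ∀ (r : {w : V // w ∈ A ∨ w = u ∨ w = v}), r.val ≠ w'.val → r ≠ w' :=
        fun r h hc => h (congrArg Subtype.val hc)
      rcases w'.2 with hwA | hwu' | hwv'
      · have hw := hbi.2 w'.val p.val q.val (fun h => hp (Subtype.ext h))
          (fun h => hq (Subtype.ext h))
        have hmain := rtg_map πA
          (stepAvoidA w'.val (fun h => hAu (h ▸ hwA)) (fun h => hAv (h ▸ hwA))) hw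
        rw [hpiApos p.val p.2, hpiApos q.val q.2] at hmain
        exact Relation.ReflTransGen.lift id (fun a b h => ⟨hne' a h.1, hne' b h.2.1, h.2.2⟩) _ _ hmain
      · have hauxA : ∀ b : {w : V // w ∈ A ∨ w = u ∨ w = v}, b ≠ w' → ∃ a, ∃ ha : a ∈ A,
            MGReachAvoiding fA sA w' b ⟨a, Or.inl ha⟩ := by
          intro b hbw
          rcases b.2 with h | h | h
          · refine ⟨b.val, h, ?_⟩
            have hbeq : (⟨b.val, Or.inl h⟩ : {w : V // w ∈ A ∨ w = u ∨ w = v}) = b :=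
              Subtype.ext rfl
            rw [hbeq]
            exact Relation.ReflTransGen.refl
          · exact absurd (Subtype.ext (h.trans hwu'.symm)) hbw
          · refine ⟨av1, hav1, ?_⟩
            have hbeq : b = ⟨v, Or.inr (Or.inr rfl)⟩ := Subtype.ext h
            rw [hbeq]
            exact .single ⟨fun hc => huv ((congrArg Subtype.val hc).trans hwu').symm,
              fun hc => hAu (((congrArg Subtype.val hc).trans hwu') ▸ hav1),
              liftadjA ev1 v av1 _ _ hbv1⟩
        obtain ⟨ap, hap, hrp⟩ := hauxA p hp
        obtain ⟨aq, haq, hrq⟩ := hauxA q hq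
        have hmid := rtg_map πA stepA2 (hAconn ap hap aq haq)
        rw [hpiApos ap (Or.inl hap), hpiApos aq (Or.inl haq)] at hmid
        have hmid' : MGReachAvoiding fA sA w' ⟨ap, Or.inl hap⟩ ⟨aq, Or.inl haq⟩ :=
          Relation.ReflTransGen.lift id (fun a b h =>
            ⟨fun hc => hAu (((congrArg Subtype.val hc).trans hwu') ▸ h.1),
             fun hc => hAu (((congrArg Subtype.val hc).trans hwu') ▸ h.2.1), h.2.2⟩) _ _ hmid
        exact (hrp.trans hmid').trans (mgreach_symm fA sA w' hrq)
      · have hauxA : ∀ b : {w : V // w ∈ A ∨ w = u ∨ w = v}, b ≠ w' → ∃ a, ∃ ha : a ∈ A,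
            MGReachAvoiding fA sA w' b ⟨a, Or.inl ha⟩ := by
          intro b hbw
          rcases b.2 with h | h | h
          · refine ⟨b.val, h, ?_⟩
            have hbeq : (⟨b.val, Or.inl h⟩ : {w : V // w ∈ A ∨ w = u ∨ w = v}) = b :=
              Subtype.ext rfl
            rw [hbeq]
            exact Relation.ReflTransGen.refl
          · refine ⟨au1, hau1, ?_⟩
            have hbeq : b = ⟨u, Or.inr (Or.inl rfl)⟩ := Subtype.ext h
            rw [hbeq]
            exact .single ⟨fun hc => huv ((congrArg Subtype.val hc).trans hwv'),
              fun hc => hAv (((congrArg Subtype.val hc).trans hwv') ▸ hau1),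
              liftadjA eu1 u au1 _ _ hbu1⟩
          · exact absurd (Subtype.ext (h.trans hwv'.symm)) hbw
        obtain ⟨ap, hap, hrp⟩ := hauxA p hp
        obtain ⟨aq, haq, hrq⟩ := hauxA q hq
        have hmid := rtg_map πA stepA2 (hAconn ap hap aq haq)
        rw [hpiApos ap (Or.inl hap), hpiApos aq (Or.inl haq)] at hmid
        have hmid' : MGReachAvoiding fA sA w' ⟨ap, Or.inl hap⟩ ⟨aq, Or.inl haq⟩ :=
          Relation.ReflTransGen.lift id (fun a b h =>
            ⟨fun hc => hAv (((congrArg Subtype.val hc).trans hwv') ▸ h.1),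
             fun hc => hAv (((congrArg Subtype.val hc).trans hwv') ▸ h.2.1), h.2.2⟩) _ _ hmid
        exact (hrp.trans hmid').trans (mgreach_symm fA sA w' hrq)
  · -- biconnectivity of B'
    classical
    have liftadjB : ∀ (e : E) (p q : V) (hp : p ∉ A ∧ p ≠ u ∧ p ≠ v)
        (hq : q ∉ A ∧ q ≠ u ∧ q ≠ v), MGBetween f s e p q →
        MGAdj fB sB ⟨p, hp⟩ ⟨q, hq⟩ := by
      intro e p q hp hq hb
      refine ⟨Sum.inl ⟨e, qualB hb hp hq⟩, ?_⟩
      rcases hb with ⟨h1, h2⟩ | ⟨h1, h2⟩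
      · exact Or.inl ⟨Subtype.ext ((hfB _).1.trans h1), Subtype.ext ((hfB _).2.trans h2)⟩
      · exact Or.inr ⟨Subtype.ext ((hfB _).1.trans h1), Subtype.ext ((hfB _).2.trans h2)⟩
    have hadjxy : MGAdj fB sB ⟨x, hxA, hxu, hxv⟩ ⟨y, hyA, hyu, hyv⟩ :=
      ⟨Sum.inr (), Or.inl ⟨Subtype.ext hnewB.1, Subtype.ext hnewB.2⟩⟩
    let πB : {w : V // w ∉ A ∧ w ≠ u ∧ w ≠ v} → V → {w : V // w ∉ A ∧ w ≠ u ∧ w ≠ v} :=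
      fun z w => if h : w ∉ A ∧ w ≠ u ∧ w ≠ v then ⟨w, h⟩ else z
    have hpiBpos : ∀ z (w : V) (h : w ∉ A ∧ w ≠ u ∧ w ≠ v), πB z w = ⟨w, h⟩ :=
      fun z w h => dif_pos h
    have hpiBneg : ∀ z (w : V), ¬(w ∉ A ∧ w ≠ u ∧ w ≠ v) → πB z w = z :=
      fun z w h => dif_neg h
    have stepB : ∀ (z : {w : V // w ∉ A ∧ w ≠ u ∧ w ≠ v}), (z.val = x ∨ z.val = y) →
        ∀ (w₀ : V), z.val ≠ w₀ → ∀ a b : V, (a ≠ w₀ ∧ b ≠ w₀ ∧ MGAdj f s a b) →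
        Relation.ReflTransGen (fun p q => p.val ≠ w₀ ∧ q.val ≠ w₀ ∧ MGAdj fB sB p q)
          (πB z a) (πB z b) := by
      rintro z hz w₀ hzw a b ⟨ha, hb, e, hbtw⟩
      by_cases haT : a ∉ A ∧ a ≠ u ∧ a ≠ v <;> by_cases hbT : b ∉ A ∧ b ≠ u ∧ b ≠ v
      · rw [hpiBpos z a haT, hpiBpos z b hbT]
        exact .single ⟨ha, hb, liftadjB e a b haT hbT hbtw⟩
      · rw [hpiBpos z a haT, hpiBneg z b hbT]
        have hbT' : b ∈ A ∨ b = u ∨ b = v := by tauto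
        rcases hbT' with h | h | h
        · rcases hAedge e b a h hbtw.symm with h' | h' | h'
          exacts [absurd h' haT.1, absurd h' haT.2.1, absurd h' haT.2.2]
        · obtain ⟨-, hax⟩ := keyu e a (h ▸ hbtw.symm) haT.1
          by_cases haz : (⟨a, haT⟩ : {w : V // w ∉ A ∧ w ≠ u ∧ w ≠ v}) = z
          · rw [haz]
          · rcases hz with hz | hz
            · exact absurd (Subtype.ext (hax.trans hz.symm)) haz
            · have h1 : (⟨a, haT⟩ : {w : V // w ∉ A ∧ w ≠ u ∧ w ≠ v}) =
                  ⟨x, hxA, hxu, hxv⟩ := Subtype.ext hax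
              have h2 : z = ⟨y, hyA, hyu, hyv⟩ := Subtype.ext hz
              refine .single ⟨ha, hzw, ?_⟩
              rw [h1, h2]
              exact hadjxy
        · obtain ⟨-, hay⟩ := keyv e a (h ▸ hbtw.symm) haT.1
          by_cases haz : (⟨a, haT⟩ : {w : V // w ∉ A ∧ w ≠ u ∧ w ≠ v}) = z
          · rw [haz]
          · rcases hz with hz | hz
            · have h1 : (⟨a, haT⟩ : {w : V // w ∉ A ∧ w ≠ u ∧ w ≠ v}) =
                  ⟨y, hyA, hyu, hyv⟩ := Subtype.ext hay
              have h2 : z = ⟨x, hxA, hxu, hxv⟩ := Subtype.ext hz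
              refine .single ⟨ha, hzw, ?_⟩
              rw [h1, h2]
              exact mgadj_symm hadjxy
            · exact absurd (Subtype.ext (hay.trans hz.symm)) haz
      · rw [hpiBneg z a haT, hpiBpos z b hbT]
        have haT' : a ∈ A ∨ a = u ∨ a = v := by tauto
        rcases haT' with h | h | h
        · rcases hAedge e a b h hbtw with h' | h' | h'
          exacts [absurd h' hbT.1, absurd h' hbT.2.1, absurd h' hbT.2.2]
        · obtain ⟨-, hbx⟩ := keyu e b (h ▸ hbtw) hbT.1
          by_cases hbz : (⟨b, hbT⟩ : {w : V // w ∉ A ∧ w ≠ u ∧ w ≠ v}) = z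
          · rw [hbz]
          · rcases hz with hz | hz
            · exact absurd (Subtype.ext (hbx.trans hz.symm)) hbz
            · have h1 : (⟨b, hbT⟩ : {w : V // w ∉ A ∧ w ≠ u ∧ w ≠ v}) =
                  ⟨x, hxA, hxu, hxv⟩ := Subtype.ext hbx
              have h2 : z = ⟨y, hyA, hyu, hyv⟩ := Subtype.ext hz
              refine .single ⟨hzw, hb, ?_⟩
              rw [h1, h2]
              exact mgadj_symm hadjxy
        · obtain ⟨-, hby⟩ := keyv e b (h ▸ hbtw) hbT.1
          by_cases hbz : (⟨b, hbT⟩ : {w : V // w ∉ A ∧ w ≠ u ∧ w ≠ v}) = z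
          · rw [hbz]
          · rcases hz with hz | hz
            · have h1 : (⟨b, hbT⟩ : {w : V // w ∉ A ∧ w ≠ u ∧ w ≠ v}) =
                  ⟨y, hyA, hyu, hyv⟩ := Subtype.ext hby
              have h2 : z = ⟨x, hxA, hxu, hxv⟩ := Subtype.ext hz
              refine .single ⟨hzw, hb, ?_⟩
              rw [h1, h2]
              exact hadjxy
            · exact absurd (Subtype.ext (hby.trans hz.symm)) hbz
      · rw [hpiBneg z a haT, hpiBneg z b hbT]
    refine ⟨⟨⟨⟨x, hxA, hxu, hxv⟩⟩, ?_⟩, ?_⟩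
    · intro p q
      have hw := hbi.2 u p.val q.val p.2.2.1 q.2.2.1
      have hmain := rtg_map (πB ⟨x, hxA, hxu, hxv⟩)
        (stepB ⟨x, hxA, hxu, hxv⟩ (Or.inl rfl) u hxu) hw
      rw [hpiBpos _ p.val p.2, hpiBpos _ q.val q.2] at hmain
      exact Relation.ReflTransGen.lift id (fun a b h => h.2.2) _ _ hmain
    · intro w' p q hp hq
      have hzex : ∃ z : {w : V // w ∉ A ∧ w ≠ u ∧ w ≠ v},
          (z.val = x ∨ z.val = y) ∧ z.val ≠ w'.val := by
        by_cases h : w'.val = x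
        · exact ⟨⟨y, hyA, hyu, hyv⟩, Or.inr rfl, fun hc => hxy (hc.trans h).symm⟩
        · exact ⟨⟨x, hxA, hxu, hxv⟩, Or.inl rfl, fun hc => h hc.symm⟩
      obtain ⟨z, hz1, hz2⟩ := hzex
      have hw := hbi.2 w'.val p.val q.val (fun h => hp (Subtype.ext h))
        (fun h => hq (Subtype.ext h))
      have hmain := rtg_map (πB z) (stepB z hz1 w'.val hz2) hw
      rw [hpiBpos _ p.val p.2, hpiBpos _ q.val q.2] at hmain
      exact Relation.ReflTransGen.lift id (fun a b h =>
        ⟨fun hc => h.1 (congrArg Subtype.val hc), fun hc => h.2.1 (congrArg Subtype.val hc),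
         h.2.2⟩) _ _ hmain
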